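/- The su(2) level-k fusion coefficient N^{(k)ν}_{λμ} (for labels λ, μ, ν ∈ {0,1,…,k}) equals 1 if |λ−μ| ≤ ν ≤ min(λ+μ, 2k−λ−μ) and λ+μ+ν is even, and 0 otherwise. With this fusion rule, the fusion product of the middle label m = ⌊k/2⌋ with itself contains all labels ℓ of the same parity as 2m in the range 0 ≤ ℓ ≤ 2⌊k/2⌋ with ℓ ≤ min(2m, 2k−2m); in particular, for k even, m·m contains every even label 0, 2, …, k, so Com(A(su(2)_k))¹ already contains all ℤ/2-even basis elements and the conjugate pair length of the su(2)_k fusion algebra is 1. -/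

import Mathlib

/-- The su(2) level-k fusion coefficient N^{(k)ν}_{λμ}: it equals 1 if
|λ−μ| ≤ ν ≤ min(λ+μ, 2k−λ−μ) and λ+μ+ν is even, and 0 otherwise. -/
def su2FusionCoeff (k l m n : ℕ) : ℕ :=
  if ((l : ℤ) - (m : ℤ)).natAbs ≤ n ∧ n ≤ min (l + m) (2 * k - l - m) ∧
      (l + m + n) % 2 = 0 then 1 else 0

/-- The coefficient of the label `z` in the fusion product of a list of
labels of the su(2)_k fusion algebra (the empty product being the identity 0). -/
def su2ProdCoeff (k : ℕ) : List (Fin (k + 1)) → Fin (k + 1) → ℕ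
  | [], z => if (z : ℕ) = 0 then 1 else 0
  | x :: l, z => ∑ y, su2ProdCoeff k l y * su2FusionCoeff k (x : ℕ) (y : ℕ) (z : ℕ)

/-- Com of the su(2)_k fusion algebra: labels appearing in some x·x̄ = x·x. -/
def su2Com (k : ℕ) : Set (Fin (k + 1)) :=
  {z | ∃ x : Fin (k + 1), 0 < su2FusionCoeff k (x : ℕ) (x : ℕ) (z : ℕ)}

/-- Com^L of the su(2)_k fusion algebra: labels appearing in a product of L
elements of Com. -/
def su2ComL (k L : ℕ) : Set (Fin (k + 1)) :=
  {z | ∃ l : List (Fin (k + 1)), l.length = L ∧ (∀ w ∈ l, w ∈ su2Com k) ∧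
    0 < su2ProdCoeff k l z}

lemma su2_pos_parity {k l m n : ℕ} (h : 0 < su2FusionCoeff k l m n) :
    (l + m + n) % 2 = 0 := by
  unfold su2FusionCoeff at h
  split at h
  · exact (by assumption : _ ∧ _ ∧ _).2.2
  · simp at h

lemma su2_fz (k : ℕ) (y z : Fin (k + 1)) :
    su2FusionCoeff k 0 (y : ℕ) (z : ℕ) = if y = z then 1 else 0 := by
  have hy := y.isLt; have hz := z.isLt
  unfold su2FusionCoeff
  by_cases h : y = z
  · subst h
    rw [if_pos rfl, if_pos]
    refine ⟨by omega, by omega, by omega⟩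
  · rw [if_neg h, if_neg]
    rintro ⟨h1, h2, h3⟩
    exact h (Fin.ext (by omega))

lemma su2_prod_zero_cons (k : ℕ) (l : List (Fin (k + 1))) (z : Fin (k + 1)) :
    su2ProdCoeff k ((0 : Fin (k + 1)) :: l) z = su2ProdCoeff k l z := by
  show (∑ y, su2ProdCoeff k l y *
      su2FusionCoeff k ((0 : Fin (k + 1)) : ℕ) (y : ℕ) (z : ℕ)) = _
  simp only [Fin.val_zero, su2_fz, mul_ite, mul_one, mul_zero,
    Finset.sum_ite_eq', Finset.mem_univ, if_true]

lemma su2_prod_rep (k n : ℕ) (l : List (Fin (k + 1))) (z : Fin (k + 1)) :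
    su2ProdCoeff k (List.replicate n 0 ++ l) z = su2ProdCoeff k l z := by
  induction n with
  | zero => rfl
  | succ n ih => rw [List.replicate_succ, List.cons_append, su2_prod_zero_cons, ih]

lemma su2_prod_single (k : ℕ) (x z : Fin (k + 1)) :
    su2ProdCoeff k [x] z = su2FusionCoeff k (x : ℕ) 0 (z : ℕ) := by
  show (∑ y, su2ProdCoeff k [] y *
      su2FusionCoeff k (x : ℕ) (y : ℕ) (z : ℕ)) = _
  have : ∀ y : Fin (k + 1), su2ProdCoeff k [] y = if y = 0 then 1 else 0 := by
    intro y
    show (if (y : ℕ) = 0 then 1 else 0) = _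
    by_cases h : y = 0
    · subst h
      rw [if_pos (by simp), if_pos rfl]
    · rw [if_neg h, if_neg (fun h' => h (Fin.ext (by simp [h'])))]
  simp only [this, ite_mul, one_mul, zero_mul, Finset.sum_ite_eq, Finset.sum_ite_eq',
    Finset.mem_univ, if_true, Fin.val_zero]

lemma su2_com_even (k : ℕ) (w : Fin (k + 1)) (hw : w ∈ su2Com k) :
    (w : ℕ) % 2 = 0 := by
  obtain ⟨x, hx⟩ := hw
  have := su2_pos_parity hx
  omega

lemma su2_prod_parity (k : ℕ) : ∀ (l : List (Fin (k + 1))) (z : Fin (k + 1)),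
    (∀ w ∈ l, (w : ℕ) % 2 = 0) → 0 < su2ProdCoeff k l z → (z : ℕ) % 2 = 0 := by
  intro l
  induction l with
  | nil =>
    intro z _ hz
    unfold su2ProdCoeff at hz
    split at hz
    · omega
    · simp at hz
  | cons x l ih =>
    intro z hall hz
    have hz' : (∑ y, su2ProdCoeff k l y *
        su2FusionCoeff k (x : ℕ) (y : ℕ) (z : ℕ)) ≠ 0 := hz.ne'
    obtain ⟨y, -, hy⟩ := Finset.exists_ne_zero_of_sum_ne_zero hz'
    have h1 : 0 < su2ProdCoeff k l y := Nat.pos_of_ne_zero fun h => by simp [h] at hy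
    have h2 : 0 < su2FusionCoeff k (x : ℕ) (y : ℕ) (z : ℕ) :=
      Nat.pos_of_ne_zero fun h => by simp [h] at hy
    have hx : (x : ℕ) % 2 = 0 := hall x (by simp)
    have hyev := ih y (fun w hw => hall w (by simp [hw])) h1
    have := su2_pos_parity h2
    omega

lemma su2_self_pos (k : ℕ) (z : Fin (k + 1)) :
    0 < su2FusionCoeff k (z : ℕ) 0 (z : ℕ) := by
  have hz := z.isLt
  unfold su2FusionCoeff
  rw [if_pos ⟨by omega, by omega, by omega⟩]
  omega

lemma su2_even_mem_com {k : ℕ} (hk : Even k) (z : Fin (k + 1))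
    (hz : (z : ℕ) % 2 = 0) : z ∈ su2Com k := by
  have hk2 : k % 2 = 0 := Nat.even_iff.mp hk
  have hzlt := z.isLt
  refine ⟨⟨k / 2, by omega⟩, ?_⟩
  show 0 < su2FusionCoeff k (k / 2) (k / 2) (z : ℕ)
  unfold su2FusionCoeff
  rw [if_pos ⟨by omega, by omega, by omega⟩]
  omega

theorem stmt_19 (k : ℕ) :
    (∀ ℓ : ℕ, ℓ % 2 = (2 * (k / 2)) % 2 → ℓ ≤ 2 * (k / 2) →
      ℓ ≤ min (2 * (k / 2)) (2 * k - 2 * (k / 2)) →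
      su2FusionCoeff k (k / 2) (k / 2) ℓ = 1) ∧
    (Even k →
      (∀ z : Fin (k + 1), (z : ℕ) % 2 = 0 → z ∈ su2ComL k 1) ∧
      ∀ L : ℕ, 1 ≤ L → su2ComL k L = su2ComL k 1) := by
  constructor
  · intro ℓ h1 h2 h3
    unfold su2FusionCoeff
    rw [if_pos ⟨by omega, by omega, by omega⟩]
  · intro hk
    have hk2 : k % 2 = 0 := Nat.even_iff.mp hk
    have hcom0 : (0 : Fin (k + 1)) ∈ su2Com k := ⟨0, su2_self_pos k 0⟩
    have claim1 : ∀ z : Fin (k + 1), (z : ℕ) % 2 = 0 → z ∈ su2ComL k 1 := by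
      intro z hz
      refine ⟨[z], rfl, ?_, ?_⟩
      · intro w hw
        simp only [List.mem_singleton] at hw
        rw [hw]
        exact su2_even_mem_com hk z hz
      · rw [su2_prod_single]
        exact su2_self_pos k z
    refine ⟨claim1, ?_⟩
    intro L hL
    ext z
    constructor
    · rintro ⟨l, hlen, hcom, hpos⟩
      have hz : (z : ℕ) % 2 = 0 :=
        su2_prod_parity k l z (fun w hw => su2_com_even k w (hcom w hw)) hpos
      exact claim1 z hz
    · rintro ⟨l, hlen, hcom, hpos⟩
      have hz : (z : ℕ) % 2 = 0 :=
        su2_prod_parity k l z (fun w hw => su2_com_even k w (hcom w hw)) hpos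
      refine ⟨List.replicate (L - 1) 0 ++ [z], by simp; omega, ?_, ?_⟩
      · intro w hw
        rcases List.mem_append.mp hw with h | h
        · rw [List.eq_of_mem_replicate h]
          exact hcom0
        · simp only [List.mem_singleton] at h
          rw [h]
          exact su2_even_mem_com hk z hz
      · rw [su2_prod_rep, su2_prod_single]
        exact su2_self_pos k z
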